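/- Let n ≥ 1 be real, f ∈ (0,1), and 0 < ε₁ ≤ ε₂ with ε₂/ε₁ ≥ R = 1 + 8/(ε₁² n f). Then for all w₁, w₂ ≥ 0 satisfying f w₁ + (1−f) w₂ = 1/n, one has Φ(w₁,w₂) ≥ Φ(w₁*, w₂*) = R/(4n(f + (1−f)R)), where w₁* = 1/(n(f + (1−f)R)), w₂* = R/(n(f + (1−f)R)), and Φ(w₁,w₂) = n (f w₁² + (1−f) w₂²)/4 + 2 · max{w₁/ε₁, w₂/ε₂}². Moreover, the point (w₁*, w₂*) satisfies the constraint. -/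

import Mathlib

noncomputable section

def Phi (n f ε₁ ε₂ w₁ w₂ : ℝ) : ℝ :=
  n * (f * w₁ ^ 2 + (1 - f) * w₂ ^ 2) / 4 + 2 * (max (w₁ / ε₁) (w₂ / ε₂)) ^ 2

theorem optimal_weights_regime_B
    (n f ε₁ ε₂ R : ℝ)
    (hn : 1 ≤ n) (hf0 : 0 < f) (hf1 : f < 1)
    (hε₁ : 0 < ε₁) (hε₁₂ : ε₁ ≤ ε₂)
    (hR : R = 1 + 8 / (ε₁ ^ 2 * n * f))
    (hrR : R ≤ ε₂ / ε₁) :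
    (f * (1 / (n * (f + (1 - f) * R))) + (1 - f) * (R / (n * (f + (1 - f) * R)))
        = 1 / n) ∧
    (Phi n f ε₁ ε₂ (1 / (n * (f + (1 - f) * R))) (R / (n * (f + (1 - f) * R)))
        = R / (4 * n * (f + (1 - f) * R))) ∧
    ∀ w₁ w₂ : ℝ, 0 ≤ w₁ → 0 ≤ w₂ → f * w₁ + (1 - f) * w₂ = 1 / n →
      Phi n f ε₁ ε₂ (1 / (n * (f + (1 - f) * R))) (R / (n * (f + (1 - f) * R)))
        ≤ Phi n f ε₁ ε₂ w₁ w₂ := by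
  have hn0 : (0:ℝ) < n := lt_of_lt_of_le one_pos hn
  have hε₂ : (0:ℝ) < ε₂ := lt_of_lt_of_le hε₁ hε₁₂
  have hden : (0:ℝ) < ε₁ ^ 2 * n * f := by positivity
  have hR1 : 1 < R := by
    rw [hR]; have : 0 < 8 / (ε₁ ^ 2 * n * f) := by positivity
    linarith
  have hRid : R * (ε₁ ^ 2 * n * f) = ε₁ ^ 2 * n * f + 8 := by
    rw [hR]; field_simp
  have hS : 0 < f + (1 - f) * R := by nlinarith
  have hD : 0 < n * (f + (1 - f) * R) := by positivity
  have hmax : max ((1 / (n * (f + (1 - f) * R))) / ε₁)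
      ((R / (n * (f + (1 - f) * R))) / ε₂) = (1 / (n * (f + (1 - f) * R))) / ε₁ := by
    apply max_eq_left
    have h1 : R * ε₁ ≤ ε₂ := (le_div_iff₀ hε₁).mp hrR
    rw [div_div, div_div, div_le_div_iff₀ (by positivity) (by positivity)]
    nlinarith [mul_pos hD hε₁, mul_pos hD hε₂]
  have hval : Phi n f ε₁ ε₂ (1 / (n * (f + (1 - f) * R))) (R / (n * (f + (1 - f) * R)))
      = R / (4 * n * (f + (1 - f) * R)) := by
    rw [Phi, hmax]
    field_simp
    linear_combination (-1) * hRid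
  refine ⟨by field_simp, hval, ?_⟩
  intro w₁ w₂ hw₁ hw₂ hcon
  rw [hval, Phi]
  have hcon' : n * (f * w₁ + (1 - f) * w₂) = 1 := by rw [hcon]; field_simp
  have hAB : f * (n * (f + (1 - f) * R) * w₁ - 1)
      + (1 - f) * (n * (f + (1 - f) * R) * w₂ - R) = 0 := by
    linear_combination (f + (1 - f) * R) * hcon'
  have hA : (0:ℝ) ≤ (n * (f + (1 - f) * R) * w₁ - 1) ^ 2 := sq_nonneg _
  have hB : (0:ℝ) ≤ (n * (f + (1 - f) * R) * w₂ - R) ^ 2 := sq_nonneg _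
  -- key polynomial identity
  have hq : n ^ 3 * (f + (1 - f) * R) ^ 2 * ε₁ ^ 2 * (f * w₁ ^ 2 + (1 - f) * w₂ ^ 2)
      + 8 * n ^ 2 * (f + (1 - f) * R) ^ 2 * w₁ ^ 2
      - R * ε₁ ^ 2 * n * (f + (1 - f) * R)
      = n * ε₁ ^ 2 * f * (n * (f + (1 - f) * R) * w₁ - 1) ^ 2
      + n * ε₁ ^ 2 * (1 - f) * (n * (f + (1 - f) * R) * w₂ - R) ^ 2
      + 8 * (n * (f + (1 - f) * R) * w₁ - 1) ^ 2 := by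
    linear_combination (2 * n * ε₁ ^ 2 * R) * hAB
      - (2 * (n * (f + (1 - f) * R) * w₁ - 1) + 1) * hRid
  have hSOS : (0:ℝ) ≤ n * ε₁ ^ 2 * f * (n * (f + (1 - f) * R) * w₁ - 1) ^ 2
      + n * ε₁ ^ 2 * (1 - f) * (n * (f + (1 - f) * R) * w₂ - R) ^ 2
      + 8 * (n * (f + (1 - f) * R) * w₁ - 1) ^ 2 := by
    have h1f : (0:ℝ) < 1 - f := by linarith
    positivity
  have hmain : R * ε₁ ^ 2 * n * (f + (1 - f) * R)
      ≤ n ^ 3 * (f + (1 - f) * R) ^ 2 * ε₁ ^ 2 * (f * w₁ ^ 2 + (1 - f) * w₂ ^ 2)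
      + 8 * n ^ 2 * (f + (1 - f) * R) ^ 2 * w₁ ^ 2 := by linarith
  -- drop the max to w₁/ε₁
  have hmaxge : (w₁ / ε₁) ^ 2 ≤ (max (w₁ / ε₁) (w₂ / ε₂)) ^ 2 := by
    have h0 : 0 ≤ w₁ / ε₁ := by positivity
    exact pow_le_pow_left₀ h0 (le_max_left _ _) 2
  have hfin : R / (4 * n * (f + (1 - f) * R))
      ≤ n * (f * w₁ ^ 2 + (1 - f) * w₂ ^ 2) / 4 + 2 * (w₁ / ε₁) ^ 2 := by
    rw [div_le_iff₀ (by positivity : (0:ℝ) < 4 * n * (f + (1 - f) * R))]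
    rw [← mul_le_mul_iff_of_pos_right (show (0:ℝ) < ε₁ ^ 2 * n * (f + (1 - f) * R) by positivity)]
    have hexp : (n * (f * w₁ ^ 2 + (1 - f) * w₂ ^ 2) / 4 + 2 * (w₁ / ε₁) ^ 2)
        * (4 * n * (f + (1 - f) * R)) * (ε₁ ^ 2 * n * (f + (1 - f) * R))
        = n ^ 3 * (f + (1 - f) * R) ^ 2 * ε₁ ^ 2 * (f * w₁ ^ 2 + (1 - f) * w₂ ^ 2)
        + 8 * n ^ 2 * (f + (1 - f) * R) ^ 2 * w₁ ^ 2 := by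
      field_simp
      ring
    rw [hexp]
    linarith [hmain]
  linarith
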